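/- Let K be geometric with P(K = k) = q p^{k−1} (k ≥ 1), and let σ be independent of K with distribution G that is regularly varying: Ḡ(x) = L(x)/x^{α+1} with α > 0 and L slowly varying. With r = p + λb < 1 and m^{(0)}_k = λb(1 − r^k)/(1 − r), one has, as x → ∞, P((1 + m^{(0)}_{K−1}) σ > x) ~ (q L(x)/x^{α+1}) Σ_{k=0}^∞ p^k ((1 − (p + r^k λ b))/(1 − r))^{α+1}. -/

import Mathlib

open MeasureTheory ProbabilityTheory Filter Set

/-- Corollary 2.2 (a): tail asymptotics of `(1 + m^{(0)}_{K-1}) σ`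
for a geometric `K` independent of a regularly varying `σ`. -/
theorem geometric_scaled_regular_variation
    {Ω : Type*} [MeasureSpace Ω] [IsProbabilityMeasure (ℙ : Measure Ω)]
    -- parameters
    (p q lam b r : ℝ)
    (hp : 0 < p) (hp1 : p < 1) (hq : q = 1 - p)
    (hlam : 0 < lam) (hb : 0 < b) (hr : r = p + lam * b) (hr1 : r < 1)
    -- the constants `m^{(0)}_k = λ b (1 - r^k)/(1 - r)`
    (m : ℕ → ℝ) (hm : ∀ k, m k = lam * b * (1 - r ^ k) / (1 - r))
    -- a geometric random variable `K` and an independent positive `σ`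
    (K : Ω → ℕ) (σ : Ω → ℝ) (hK_meas : Measurable K) (hσ_meas : Measurable σ)
    (hKσ_indep : IndepFun K σ ℙ)
    (hK_law : ∀ k : ℕ, 1 ≤ k → ℙ {ω | K ω = k} = ENNReal.ofReal (q * p ^ (k - 1)))
    (hσ_pos : ∀ᵐ ω ∂ℙ, 0 < σ ω)
    -- the distribution `G` of `σ` is regularly varying with index `α + 1`
    (Gbar : ℝ → ℝ) (hGbar : ∀ x, Gbar x = (ℙ {ω | x < σ ω}).toReal)
    (hGpos : ∀ x, 0 < Gbar x)
    (α : ℝ) (hα : 0 < α) (L : ℝ → ℝ)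
    (hL : ∀ c : ℝ, 0 < c → Tendsto (fun x => L (c * x) / L x) atTop (nhds 1))
    (hG_rv : ∀ x : ℝ, 0 < x → Gbar x = L x / x ^ (α + 1)) :
    Tendsto (fun x : ℝ =>
      (ℙ {ω | x < (1 + m (K ω - 1)) * σ ω}).toReal /
        ((q * L x / x ^ (α + 1)) *
          ∑' k : ℕ, p ^ k * ((1 - (p + r ^ k * lam * b)) / (1 - r)) ^ (α + 1)))
      atTop (nhds 1) := by
  have hq0 : 0 < q := by rw [hq]; linarith
  have hr0 : 0 < r := by rw [hr]; positivity
  have h1r : 0 < 1 - r := by linarith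
  set c : ℕ → ℝ := fun k => 1 + m k with hcdef
  have hcapp : ∀ k, c k = 1 + m k := fun _ => rfl
  have hck : ∀ k, c k = (1 - (p + r ^ k * lam * b)) / (1 - r) := by
    intro k
    have h1 : (1 : ℝ) - (p + r ^ k * lam * b) = (1 - r) + lam * b * (1 - r ^ k) := by
      rw [hr]; ring
    rw [hcapp, hm k, h1]
    field_simp
  have hrk1 : ∀ k : ℕ, r ^ k ≤ 1 := fun k => pow_le_one₀ hr0.le hr1.le
  have hc1 : ∀ k, 1 ≤ c k := by
    intro k
    have h1 : (0:ℝ) ≤ 1 - r ^ k := by linarith [hrk1 k]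
    have h0 : 0 ≤ lam * b * (1 - r ^ k) / (1 - r) :=
      div_nonneg (mul_nonneg (mul_pos hlam hb).le h1) h1r.le
    rw [hcapp, hm k]
    linarith
  have hc0 : ∀ k, 0 < c k := fun k => lt_of_lt_of_le one_pos (hc1 k)
  set C : ℝ := 1 + lam * b / (1 - r) with hCdef
  have hcC : ∀ k, c k ≤ C := by
    intro k
    have h1 : lam * b * (1 - r ^ k) ≤ lam * b := by
      nlinarith [mul_nonneg (mul_pos hlam hb).le (pow_pos hr0 k).le]
    have h2 : lam * b * (1 - r ^ k) / (1 - r) ≤ lam * b / (1 - r) := by gcongr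
    rw [hcapp, hm k, hCdef]
    linarith
  have hC0 : 0 < C := lt_of_lt_of_le (hc0 0) (hcC 0)
  -- basic facts about Gbar
  have hGle1 : ∀ x, Gbar x ≤ 1 := by
    intro x
    rw [hGbar]
    have h := ENNReal.toReal_mono ENNReal.one_ne_top (prob_le_one (μ := ℙ) (s := {ω | x < σ ω}))
    simpa using h
  have hGanti : Antitone Gbar := by
    intro x y hxy
    rw [hGbar, hGbar]
    apply ENNReal.toReal_mono (measure_ne_top _ _)
    exact measure_mono (fun ω h => lt_of_le_of_lt hxy h)
  have hLpos : ∀ x : ℝ, 0 < x → 0 < L x := by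
    intro x hx
    have hxp : (0:ℝ) < x ^ (α+1) := Real.rpow_pos_of_pos hx _
    have h := hGpos x
    rw [hG_rv x hx] at h
    rcases div_pos_iff.mp h with ⟨h1, _⟩ | ⟨_, h2⟩
    · exact h1
    · linarith
  -- the key limit
  have key : ∀ c' : ℝ, 0 < c' →
      Tendsto (fun x => Gbar (x / c') * (x ^ (α+1) / L x)) atTop (nhds (c' ^ (α+1))) := by
    intro c' hc'
    have h1 : Tendsto (fun x => L (c'⁻¹ * x) / L x * c' ^ (α+1)) atTop
        (nhds (1 * c' ^ (α+1))) := (hL c'⁻¹ (inv_pos.mpr hc')).mul_const _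
    rw [one_mul] at h1
    refine Filter.Tendsto.congr' ?_ h1
    filter_upwards [eventually_gt_atTop 0] with x hx
    have hxc : 0 < x / c' := div_pos hx hc'
    have hd : (x / c') ^ (α+1) = x ^ (α+1) / c' ^ (α+1) := Real.div_rpow hx.le hc'.le _
    have hx1 : x ^ (α+1) ≠ 0 := (Real.rpow_pos_of_pos hx _).ne'
    have hcp : c' ^ (α+1) ≠ 0 := (Real.rpow_pos_of_pos hc' _).ne'
    have hL1 : L x ≠ 0 := (hLpos x hx).ne'
    rw [hG_rv _ hxc, hd, inv_mul_eq_div]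
    field_simp
  -- law of K
  have hPK : ∀ k : ℕ, ℙ {ω | K ω = k + 1} = ENNReal.ofReal (q * p ^ k) := by
    intro k
    simpa using hK_law (k+1) (Nat.le_add_left 1 k)
  have hgeom : Summable (fun k : ℕ => q * p ^ k) :=
    (summable_geometric_of_lt_one hp.le hp1).mul_left q
  have hsumq : ∑' k : ℕ, q * p ^ k = 1 := by
    rw [tsum_mul_left, tsum_geometric_of_lt_one hp.le hp1, hq]
    exact mul_inv_cancel₀ (by linarith)
  have hmeasA : ∀ n : ℕ, MeasurableSet {ω : Ω | K ω = n} :=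
    fun n => hK_meas (measurableSet_singleton n)
  have hdisjK : Pairwise (Function.onFun Disjoint (fun n : ℕ => {ω : Ω | K ω = n})) := by
    intro i j hij
    simp only [Function.onFun, Set.disjoint_left, mem_setOf_eq]
    intro ω h1 h2
    exact hij (h1 ▸ h2 ▸ rfl)
  have hsum1 : ∑' k : ℕ, ℙ {ω | K ω = k + 1} = 1 := by
    simp_rw [hPK]
    rw [← ENNReal.ofReal_tsum_of_nonneg (fun k => by positivity) hgeom, hsumq,
      ENNReal.ofReal_one]
  have hK0 : ℙ {ω | K ω = 0} = 0 := by
    have htot : ∑' n : ℕ, ℙ {ω | K ω = n} = 1 := by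
      rw [← measure_iUnion hdisjK hmeasA]
      have h : (⋃ n : ℕ, {ω : Ω | K ω = n}) = univ := by ext ω; simp
      rw [h, measure_univ]
    have hshift : ∑' n : ℕ, ℙ {ω | K ω = n}
        = ℙ {ω | K ω = 0} + ∑' k : ℕ, ℙ {ω | K ω = k+1} :=
      tsum_eq_zero_add' ENNReal.summable
    have h : ℙ {ω | K ω = 0} + ∑' k : ℕ, ℙ {ω | K ω = k+1} = 1 := by
      rw [← hshift]; exact htot
    rw [hsum1] at h
    have h' : ℙ {ω | K ω = 0} + 1 = 0 + 1 := by rw [zero_add]; exact h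
    exact WithTop.add_right_cancel ENNReal.one_ne_top h'
  -- decomposition of the numerator
  have hN : ∀ x : ℝ, (ℙ {ω | x < (1 + m (K ω - 1)) * σ ω}).toReal
      = ∑' k : ℕ, q * p ^ k * Gbar (x / c k) := by
    intro x
    have hsetB : ∀ n : ℕ, {ω : Ω | x < (1 + m n) * σ ω} = σ ⁻¹' (Ioi (x / c n)) := by
      intro n
      ext ω
      simp only [mem_setOf_eq, mem_preimage, mem_Ioi]
      rw [div_lt_iff₀ (hc0 n), hcapp n, mul_comm (σ ω) (1 + m n)]
    have hset : {ω : Ω | x < (1 + m (K ω - 1)) * σ ω}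
        = ⋃ n : ℕ, ({ω : Ω | K ω = n} ∩ {ω : Ω | x < (1 + m (n - 1)) * σ ω}) := by
      ext ω
      simp only [mem_iUnion, mem_inter_iff, mem_setOf_eq]
      exact ⟨fun h => ⟨K ω, rfl, h⟩, fun ⟨n, hn, h⟩ => by rw [hn]; exact h⟩
    have hmeas2 : ∀ n : ℕ,
        MeasurableSet ({ω : Ω | K ω = n} ∩ {ω : Ω | x < (1 + m (n - 1)) * σ ω}) := by
      intro n
      exact (hmeasA n).inter ((hsetB (n-1)) ▸ hσ_meas measurableSet_Ioi)
    have hdisj2 : Pairwise (Function.onFun Disjoint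
        (fun n : ℕ => {ω : Ω | K ω = n} ∩ {ω : Ω | x < (1 + m (n - 1)) * σ ω})) :=
      fun i j hij => (hdisjK hij).mono inter_subset_left inter_subset_left
    have h0 : ℙ ({ω : Ω | K ω = 0} ∩ {ω : Ω | x < (1 + m (0 - 1)) * σ ω}) = 0 :=
      measure_mono_null inter_subset_left hK0
    have hterm : ∀ k : ℕ,
        ℙ ({ω : Ω | K ω = k + 1} ∩ {ω : Ω | x < (1 + m (k + 1 - 1)) * σ ω})
        = ENNReal.ofReal (q * p ^ k * Gbar (x / c k)) := by
      intro k
      have h1 : {ω : Ω | K ω = k + 1} = K ⁻¹' {k+1} := by ext ω; simp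
      have h2 : {ω : Ω | x < (1 + m (k + 1 - 1)) * σ ω} = σ ⁻¹' (Ioi (x / c k)) := by
        have hnat : k + 1 - 1 = k := rfl
        rw [hnat]
        exact hsetB k
      rw [h1, h2, hKσ_indep.measure_inter_preimage_eq_mul _ _
        (measurableSet_singleton _) measurableSet_Ioi]
      have h3 : ℙ (σ ⁻¹' Ioi (x / c k)) = ENNReal.ofReal (Gbar (x / c k)) := by
        have hpre : σ ⁻¹' Ioi (x / c k) = {ω : Ω | x / c k < σ ω} := by ext ω; simp [mem_Ioi]
        rw [hpre, hGbar, ENNReal.ofReal_toReal (measure_ne_top _ _)]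
      have h4 : ℙ (K ⁻¹' {k+1}) = ENNReal.ofReal (q * p ^ k) := by
        rw [← h1]; exact hPK k
      rw [h4, h3, ← ENNReal.ofReal_mul (by positivity)]
    have hsumm : Summable (fun k : ℕ => q * p ^ k * Gbar (x / c k)) := by
      apply Summable.of_nonneg_of_le
        (fun k => mul_nonneg (by positivity) (hGpos _).le)
        (fun k => ?_) hgeom
      calc q * p ^ k * Gbar (x / c k) ≤ q * p ^ k * 1 := by
            apply mul_le_mul_of_nonneg_left (hGle1 _) (by positivity)
        _ = q * p ^ k := mul_one _
    rw [hset, measure_iUnion hdisj2 hmeas2, tsum_eq_zero_add' ENNReal.summable, h0, zero_add]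
    have htc : ∑' k : ℕ, ℙ ({ω : Ω | K ω = k + 1} ∩ {ω : Ω | x < (1 + m (k + 1 - 1)) * σ ω})
        = ENNReal.ofReal (∑' k : ℕ, q * p ^ k * Gbar (x / c k)) := by
      rw [ENNReal.ofReal_tsum_of_nonneg (fun k => mul_nonneg (by positivity) (hGpos _).le) hsumm]
      exact tsum_congr hterm
    rw [htc, ENNReal.toReal_ofReal
      (tsum_nonneg (fun k => mul_nonneg (by positivity) (hGpos _).le))]
  -- the limit sum
  set S : ℝ := ∑' k : ℕ, p ^ k * ((1 - (p + r ^ k * lam * b)) / (1 - r)) ^ (α + 1) with hSdef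
  have hSc : S = ∑' k : ℕ, p ^ k * (c k) ^ (α+1) := by
    rw [hSdef]
    exact tsum_congr fun k => by rw [hck k]
  have hSsum : Summable (fun k : ℕ => p ^ k * (c k) ^ (α+1)) := by
    apply Summable.of_nonneg_of_le
      (fun k => mul_nonneg (by positivity) (Real.rpow_nonneg (hc0 k).le _))
      (fun k => ?_) ((summable_geometric_of_lt_one hp.le hp1).mul_right (C ^ (α+1)))
    apply mul_le_mul_of_nonneg_left _ (by positivity)
    exact Real.rpow_le_rpow (hc0 k).le (hcC k) (by linarith)
  have hc0eq : c 0 = 1 := by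
    rw [hcapp, hm 0]
    simp
  have hS1 : 1 ≤ S := by
    rw [hSc]
    have h := Summable.le_tsum hSsum 0
      (fun k _ => mul_nonneg (by positivity) (Real.rpow_nonneg (hc0 k).le _))
    simpa [hc0eq, Real.one_rpow] using h
  have hS0 : 0 < S := lt_of_lt_of_le one_pos hS1
  -- dominated convergence
  have hmain : Tendsto (fun x => ∑' k : ℕ, p ^ k * Gbar (x / c k) * (x ^ (α+1) / L x)) atTop
      (nhds (∑' k : ℕ, p ^ k * (c k) ^ (α+1))) := by
    apply tendsto_tsum_of_dominated_convergence
      (bound := fun k : ℕ => p ^ k * (C ^ (α+1) + 1))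
      ((summable_geometric_of_lt_one hp.le hp1).mul_right _)
    · intro k
      have h := (key (c k) (hc0 k)).const_mul (p ^ k)
      simpa [mul_assoc] using h
    · have hCb := key C hC0
      have hev : ∀ᶠ x in atTop, Gbar (x / C) * (x ^ (α+1) / L x) < C ^ (α+1) + 1 :=
        hCb.eventually_lt_const (lt_add_one _)
      filter_upwards [hev, eventually_gt_atTop 0] with x hx1 hx0 k
      have hnn : 0 ≤ x ^ (α+1) / L x :=
        div_nonneg (Real.rpow_nonneg hx0.le _) (hLpos x hx0).le
      have hxdiv : x / C ≤ x / c k := by gcongr <;> [exact hc0 k; exact hcC k]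
      have hb1 : Gbar (x / c k) ≤ Gbar (x / C) := hGanti hxdiv
      have hle : Gbar (x / c k) * (x ^ (α+1) / L x) ≤ C ^ (α+1) + 1 :=
        le_trans (mul_le_mul_of_nonneg_right hb1 hnn) hx1.le
      have hnonneg : 0 ≤ p ^ k * Gbar (x / c k) * (x ^ (α+1) / L x) :=
        mul_nonneg (mul_nonneg (by positivity) (hGpos _).le) hnn
      rw [Real.norm_eq_abs, abs_of_nonneg hnonneg, mul_assoc]
      exact mul_le_mul_of_nonneg_left hle (by positivity)
  -- final assembly
  have hfinal : Tendsto
      (fun x => (∑' k : ℕ, p ^ k * Gbar (x / c k) * (x ^ (α+1) / L x)) / S) atTop (nhds 1) := by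
    have h := hmain.div_const S
    rwa [← hSc, div_self hS0.ne'] at h
  refine Filter.Tendsto.congr' ?_ hfinal
  filter_upwards [eventually_gt_atTop 0] with x hx
  have hx1 : x ^ (α+1) ≠ 0 := (Real.rpow_pos_of_pos hx _).ne'
  have hL1 : L x ≠ 0 := (hLpos x hx).ne'
  rw [hN x, tsum_mul_right]
  have hA : ∑' k : ℕ, q * p ^ k * Gbar (x / c k) = q * ∑' k : ℕ, p ^ k * Gbar (x / c k) := by
    rw [← tsum_mul_left]
    exact tsum_congr fun k => by ring
  rw [hA]
  have hq1 : q ≠ 0 := hq0.ne'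
  have hS0' : S ≠ 0 := hS0.ne'
  field_simp
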